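/- Let h_k = (-1)^k Γ((τ+4k+2)/2) u^k / (2·Γ(k+1)) for u > 0 and τ > -2, and let σ > 0. Then the double series Σ_{l=0}^∞ J(τ,l) Σ_{k=0}^l C(l,k) σ^{l-k} 2·k!·h_k/Γ((τ+4k+2)/2), with J(τ,l) = (1/l!)∫_0^∞ t^{τ+4l+1}e^{-t²-σt⁴}dt, is absolutely bounded by ∫_0^∞ t^{τ+1} e^{-t² - σt⁴ + |σ-u|t⁴} dt, which is finite whenever |σ - u| < σ. -/

import Mathlib

open MeasureTheory Real Set

lemma aux_contOn (p b c : ℝ) :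
    ContinuousOn (fun t : ℝ => t ^ p * Real.exp (-t ^ 2 - b * t ^ 4 + c * t ^ 4)) (Ioi 0) := by
  apply ContinuousOn.mul
  · exact fun t ht => (continuousWithinAt_id.rpow_const (Or.inl (ne_of_gt ht)))
  · apply Continuous.continuousOn
    continuity

lemma aux_integrable (p b : ℝ) (hp : -1 < p) (hb : 0 ≤ b) :
    IntegrableOn (fun t : ℝ => t ^ p * Real.exp (-t ^ 2 - b * t ^ 4)) (Ioi 0) := by
  have h0 : IntegrableOn (fun t : ℝ => t ^ p * Real.exp (-(1 : ℝ) * t ^ 2)) (Ioi 0) :=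
    integrableOn_rpow_mul_exp_neg_mul_sq one_pos hp
  refine Integrable.mono' h0 ?_ ?_
  · have : ContinuousOn (fun t : ℝ => t ^ p * Real.exp (-t ^ 2 - b * t ^ 4 + 0 * t ^ 4))
        (Ioi 0) := aux_contOn p b 0
    simp only [zero_mul, add_zero] at this
    exact (this.aemeasurable measurableSet_Ioi).aestronglyMeasurable
  · filter_upwards [ae_restrict_mem measurableSet_Ioi] with t ht
    have ht0 : 0 < t := ht
    have h1 : 0 ≤ t ^ p := Real.rpow_nonneg ht0.le p
    rw [Real.norm_eq_abs, abs_mul, abs_of_nonneg h1, abs_of_nonneg (Real.exp_nonneg _)]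
    have h2 : -t ^ 2 - b * t ^ 4 ≤ -(1 : ℝ) * t ^ 2 := by nlinarith [pow_pos ht0 4]
    exact mul_le_mul_of_nonneg_left (Real.exp_le_exp.mpr h2) h1

theorem stmt_10 (τ σ u : ℝ) (hτ : -2 < τ) (hσ : 0 < σ) (hu : 0 < u)
    (h : ℕ → ℝ)
    (hh : ∀ k : ℕ, h k = (-1) ^ k * Real.Gamma ((τ + 4 * k + 2) / 2) * u ^ k /
      (2 * (k.factorial : ℝ)))
    (J : ℕ → ℝ)
    (hJ : ∀ l : ℕ, J l = (1 / (l.factorial : ℝ)) *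
      ∫ t in Ioi (0 : ℝ), t ^ (τ + 4 * l + 1) * Real.exp (-t ^ 2 - σ * t ^ 4)) :
    (∑' l : ℕ,
        |J l * ∑ k ∈ Finset.range (l + 1),
          (l.choose k : ℝ) * σ ^ (l - k) *
            (2 * (k.factorial : ℝ) * h k / Real.Gamma ((τ + 4 * k + 2) / 2))|)
      ≤ ∫ t in Ioi (0 : ℝ),
          t ^ (τ + 1) * Real.exp (-t ^ 2 - σ * t ^ 4 + |σ - u| * t ^ 4) ∧
    (|σ - u| < σ →
      IntegrableOn
        (fun t : ℝ => t ^ (τ + 1) * Real.exp (-t ^ 2 - σ * t ^ 4 + |σ - u| * t ^ 4))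
        (Ioi 0)) := by
  set c : ℝ := |σ - u| with hc
  have hc0 : 0 ≤ c := abs_nonneg _
  set F : ℝ → ℝ := fun t => t ^ (τ + 1) * Real.exp (-t ^ 2 - σ * t ^ 4 + c * t ^ 4) with hF
  -- part 2
  have part2 : c < σ → IntegrableOn F (Ioi 0) := by
    intro hcs
    have h1 : IntegrableOn (fun t : ℝ => t ^ (τ + 1) * Real.exp (-t ^ 2 - (σ - c) * t ^ 4))
        (Ioi 0) := aux_integrable (τ + 1) (σ - c) (by linarith) (by linarith)
    have heq : (fun t : ℝ => t ^ (τ + 1) * Real.exp (-t ^ 2 - (σ - c) * t ^ 4)) = F := by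
      funext t; rw [hF]; ring_nf
    rwa [heq] at h1
  -- simplify the inner sum
  have hΓpos : ∀ k : ℕ, 0 < Real.Gamma ((τ + 4 * k + 2) / 2) := by
    intro k
    apply Real.Gamma_pos_of_pos
    have : (0 : ℝ) ≤ (k : ℝ) := Nat.cast_nonneg k
    linarith
  have hterm : ∀ k : ℕ, 2 * (k.factorial : ℝ) * h k / Real.Gamma ((τ + 4 * k + 2) / 2)
      = (-u) ^ k := by
    intro k
    have hfac : ((k.factorial : ℝ)) ≠ 0 := Nat.cast_ne_zero.mpr k.factorial_ne_zero
    have hΓ : Real.Gamma ((τ + 4 * k + 2) / 2) ≠ 0 := (hΓpos k).ne'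
    rw [hh k, neg_pow]
    field_simp
    ring
  have hsum : ∀ l : ℕ, (∑ k ∈ Finset.range (l + 1),
      (l.choose k : ℝ) * σ ^ (l - k) *
        (2 * (k.factorial : ℝ) * h k / Real.Gamma ((τ + 4 * k + 2) / 2))) = (σ - u) ^ l := by
    intro l
    have : (σ - u) = (-u) + σ := by ring
    rw [this, add_pow]
    refine Finset.sum_congr rfl fun k _ => ?_
    rw [hterm k]; ring
  -- the integrals I l
  set I : ℕ → ℝ := fun l => ∫ t in Ioi (0 : ℝ),
      t ^ (τ + 4 * l + 1) * Real.exp (-t ^ 2 - σ * t ^ 4) with hI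
  have hIint : ∀ l : ℕ, IntegrableOn
      (fun t : ℝ => t ^ (τ + 4 * l + 1) * Real.exp (-t ^ 2 - σ * t ^ 4)) (Ioi 0) := by
    intro l
    refine aux_integrable _ σ ?_ hσ.le
    have : (0 : ℝ) ≤ (l : ℝ) := Nat.cast_nonneg l
    linarith
  have hInn : ∀ l : ℕ, ∀ t ∈ Ioi (0 : ℝ),
      0 ≤ t ^ (τ + 4 * l + 1) * Real.exp (-t ^ 2 - σ * t ^ 4) := by
    intro l t ht
    exact mul_nonneg (Real.rpow_nonneg (le_of_lt ht) _) (Real.exp_nonneg _)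
  have hI0 : ∀ l : ℕ, 0 ≤ I l := fun l =>
    setIntegral_nonneg measurableSet_Ioi (hInn l)
  -- the terms
  set a : ℕ → ℝ := fun l => c ^ l / (l.factorial : ℝ) * I l with ha
  have ha0 : ∀ l, 0 ≤ a l := fun l =>
    mul_nonneg (div_nonneg (pow_nonneg hc0 l) (Nat.cast_nonneg _)) (hI0 l)
  have hterm_eq : ∀ l : ℕ,
      |J l * ∑ k ∈ Finset.range (l + 1),
          (l.choose k : ℝ) * σ ^ (l - k) *
            (2 * (k.factorial : ℝ) * h k / Real.Gamma ((τ + 4 * k + 2) / 2))| = a l := by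
    intro l
    rw [hsum l, hJ l, abs_mul, abs_mul, abs_pow, ← hc, abs_of_nonneg (hI0 l)]
    rw [abs_of_nonneg (by positivity : (0:ℝ) ≤ 1 / (l.factorial : ℝ))]
    rw [ha]
    show 1 / (l.factorial : ℝ) * I l * c ^ l = c ^ l / (l.factorial : ℝ) * I l
    ring
  -- g l
  set g : ℕ → ℝ → ℝ := fun l t => c ^ l / (l.factorial : ℝ) *
      (t ^ (τ + 4 * l + 1) * Real.exp (-t ^ 2 - σ * t ^ 4)) with hg
  have hgInt : ∀ l, IntegrableOn (g l) (Ioi 0) := fun l => (hIint l).const_mul _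
  have hg0 : ∀ l, ∀ t ∈ Ioi (0 : ℝ), 0 ≤ g l t := fun l t ht =>
    mul_nonneg (div_nonneg (pow_nonneg hc0 l) (Nat.cast_nonneg _)) (hInn l t ht)
  have hael : ∀ l : ℕ, 0 ≤ᵐ[volume.restrict (Ioi (0:ℝ))] g l := by
    intro l
    filter_upwards [ae_restrict_mem measurableSet_Ioi] with t ht using hg0 l t ht
  have haInt : ∀ l : ℕ, a l = ∫ t in Ioi (0 : ℝ), g l t := by
    intro l
    rw [ha, hg, hI]
    simp only
    rw [MeasureTheory.integral_const_mul]
  have hB : ∀ l : ℕ, ENNReal.ofReal (a l) = ∫⁻ t in Ioi (0 : ℝ), ENNReal.ofReal (g l t) := by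
    intro l
    rw [haInt l]
    exact MeasureTheory.ofReal_integral_eq_lintegral_ofReal (hgInt l) (hael l)
  -- sum of lintegrals
  set L : ENNReal := ∫⁻ t in Ioi (0 : ℝ), ENNReal.ofReal (F t) with hL
  have hC : (∑' l : ℕ, ENNReal.ofReal (a l)) = L := by
    have hmeas : ∀ l : ℕ, AEMeasurable (fun t => ENNReal.ofReal (g l t))
        (volume.restrict (Ioi (0:ℝ))) := by
      intro l
      exact ((hgInt l).aemeasurable.ennreal_ofReal)
    calc (∑' l : ℕ, ENNReal.ofReal (a l))
        = ∑' l : ℕ, ∫⁻ t in Ioi (0 : ℝ), ENNReal.ofReal (g l t) := by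
          exact tsum_congr hB
      _ = ∫⁻ t in Ioi (0 : ℝ), ∑' l : ℕ, ENNReal.ofReal (g l t) :=
          (MeasureTheory.lintegral_tsum hmeas).symm
      _ = L := by
        rw [hL]
        apply MeasureTheory.lintegral_congr_ae
        filter_upwards [ae_restrict_mem measurableSet_Ioi] with t ht
        have ht0 : 0 < t := ht
        -- pointwise identity
        have hpow : ∀ l : ℕ, t ^ (τ + 4 * l + 1) = t ^ (τ + 1) * (t ^ 4) ^ l := by
          intro l
          have h1 : τ + 4 * l + 1 = (τ + 1) + (4 : ℝ) * l := by ring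
          rw [h1, Real.rpow_add ht0, Real.rpow_mul ht0.le, Real.rpow_natCast]
          congr 2
          rw [show ((4 : ℝ)) = ((4 : ℕ) : ℝ) by norm_num, Real.rpow_natCast]
      -- now sum
        have hsummable : Summable (fun l : ℕ => g l t) := by
          have : Summable (fun l : ℕ => (c * t ^ 4) ^ l / (l.factorial : ℝ)) :=
            Real.summable_pow_div_factorial (c * t ^ 4)
          have heq : (fun l : ℕ => g l t) = fun l : ℕ =>
              (t ^ (τ + 1) * Real.exp (-t ^ 2 - σ * t ^ 4)) *
                ((c * t ^ 4) ^ l / (l.factorial : ℝ)) := by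
            funext l
            rw [hg]
            simp only
            rw [hpow l, mul_pow]
            ring
          rw [heq]
          exact this.mul_left _
        rw [← ENNReal.ofReal_tsum_of_nonneg (fun l => hg0 l t ht) hsummable]
        congr 1
        have heq : (fun l : ℕ => g l t) = fun l : ℕ =>
            (t ^ (τ + 1) * Real.exp (-t ^ 2 - σ * t ^ 4)) *
              ((c * t ^ 4) ^ l / (l.factorial : ℝ)) := by
          funext l
          rw [hg]
          simp only
          rw [hpow l, mul_pow]
          ring
        rw [heq, tsum_mul_left]
        have hexp : (∑' l : ℕ, (c * t ^ 4) ^ l / (l.factorial : ℝ)) = Real.exp (c * t ^ 4) := by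
          rw [Real.exp_eq_exp_ℝ, NormedSpace.exp_eq_tsum_div]
        rw [hexp, hF]
        simp only
        rw [mul_assoc, ← Real.exp_add]
  -- conclude
  have htsum_a : (∑' l : ℕ, a l) = L.toReal := by
    have h1 : (∑' l : ℕ, a l) = ∑' l : ℕ, (ENNReal.ofReal (a l)).toReal := by
      refine tsum_congr fun l => ?_
      rw [ENNReal.toReal_ofReal (ha0 l)]
    rw [h1, ← ENNReal.tsum_toReal_eq (fun l => ENNReal.ofReal_ne_top), hC]
  have hFmeas : AEStronglyMeasurable F (volume.restrict (Ioi (0:ℝ))) :=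
    ((aux_contOn (τ + 1) σ c).aemeasurable measurableSet_Ioi).aestronglyMeasurable
  have hF0 : 0 ≤ᵐ[volume.restrict (Ioi (0:ℝ))] F := by
    filter_upwards [ae_restrict_mem measurableSet_Ioi] with t ht
    exact mul_nonneg (Real.rpow_nonneg (le_of_lt ht) _) (Real.exp_nonneg _)
  have hmain : (∑' l : ℕ,
        |J l * ∑ k ∈ Finset.range (l + 1),
          (l.choose k : ℝ) * σ ^ (l - k) *
            (2 * (k.factorial : ℝ) * h k / Real.Gamma ((τ + 4 * k + 2) / 2))|)
      ≤ ∫ t in Ioi (0 : ℝ), F t := by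
    rw [tsum_congr hterm_eq, htsum_a]
    by_cases hLtop : L = ⊤
    · rw [hLtop]
      simp only [ENNReal.toReal_top]
      exact setIntegral_nonneg measurableSet_Ioi fun t ht =>
        mul_nonneg (Real.rpow_nonneg (le_of_lt ht) _) (Real.exp_nonneg _)
    · have hFint : IntegrableOn F (Ioi 0) := by
        refine ⟨hFmeas, ?_⟩
        rw [hasFiniteIntegral_iff_ofReal hF0]
        exact Ne.lt_top hLtop
      rw [MeasureTheory.integral_eq_lintegral_of_nonneg_ae hF0 hFmeas]
  exact ⟨hmain, part2⟩
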